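/- arXiv:1810.09002 — 4 statements merged into one kernel-verified Lean document; each statement's English description precedes it below -/
import Mathlib

section
/- Let n ≥ 2, let w₁,…,wₙ and d₀,…,dₙ be rationals. For any m ≤ n write c_{k,m}(w,d) = Σ_{i=0}^{k} (−1)^{k−i} e_i(d₀,…,d_m) h_{k−i}(w₁,…,w_m). Then for every k ≥ 1: c_{k,n}(w,d) = c_{k,n−1}(w₁,…,w_{n−1}; d₀,…,d_{n−1}) + (d_n − w_n)·Σ_{i=0}^{k−1} (−1)^i w_n^i · c_{k−i−1,n−1}(w₁,…,w_{n−1}; d₀,…,d_{n−1}). -/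
open Finset

/-- `esym w j` is the `j`-th elementary symmetric polynomial of `w`. -/
noncomputable def esym {n : ℕ} (w : Fin n → ℚ) (j : ℕ) : ℚ :=
  ∑ s ∈ Finset.univ.powersetCard j, ∏ i ∈ s, w i

/-- `hsym w m` is the complete homogeneous symmetric polynomial of degree `m` in `w`. -/
noncomputable def hsym {n : ℕ} (w : Fin n → ℚ) (m : ℕ) : ℚ :=
  ∑ s ∈ Finset.univ.sym m, (s.toMultiset.map w).prod

/-- virtual Chern class coefficient `c_k = Σ_{i=0}^k (-1)^{k-i} e_i(d) h_{k-i}(w)`. -/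
noncomputable def cc {n : ℕ} (w : Fin n → ℚ) (d : Fin (n+1) → ℚ) (k : ℕ) : ℚ :=
  ∑ i ∈ Finset.range (k+1), (-1)^(k-i) * esym d i * hsym w (k-i)

lemma esym_zero {n : ℕ} (w : Fin n → ℚ) : esym w 0 = 1 := by
  simp [esym]

lemma hsym_zero {n : ℕ} (w : Fin n → ℚ) : hsym w 0 = 1 := by
  simp only [hsym, Finset.sym_zero, Finset.sum_singleton]
  rfl

lemma cc_zero {n : ℕ} (w : Fin n → ℚ) (d : Fin (n+1) → ℚ) : cc w d 0 = 1 := by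
  simp [cc, esym_zero, hsym_zero]

lemma esym_succ_rec {n : ℕ} (d : Fin (n+1) → ℚ) (j : ℕ) :
    esym d (j+1) = esym (d ∘ Fin.castSucc) (j+1) + d (Fin.last n) * esym (d ∘ Fin.castSucc) j := by
  classical
  unfold esym
  have hlast : Fin.last n ∉ (Finset.univ : Finset (Fin n)).map Fin.castSuccEmb := by
    intro h
    rw [Finset.mem_map] at h
    obtain ⟨x, _, hx⟩ := h
    exact Fin.ne_of_lt (Fin.castSucc_lt_last x) hx
  rw [Fin.univ_castSuccEmb, Finset.cons_eq_insert,
    Finset.powersetCard_succ_insert hlast]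
  have hdisj : Disjoint (Finset.powersetCard (j+1) (Finset.univ.map Fin.castSuccEmb))
      (((Finset.univ.map Fin.castSuccEmb).powersetCard j).image (insert (Fin.last n))) := by
    rw [Finset.disjoint_left]
    intro s hs hs'
    rw [Finset.mem_powersetCard] at hs
    obtain ⟨t, ht, rfl⟩ := Finset.mem_image.mp hs'
    exact hlast (hs.1 (Finset.mem_insert_self _ _))
  rw [Finset.sum_union hdisj]
  have hinj : ∀ x ∈ (Finset.univ.map Fin.castSuccEmb).powersetCard j,
      ∀ y ∈ (Finset.univ.map Fin.castSuccEmb).powersetCard j,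
      insert (Fin.last n) x = insert (Fin.last n) y → x = y := by
    intro x hx y hy h
    rw [Finset.mem_powersetCard] at hx hy
    have hxl : Fin.last n ∉ x := fun h' => hlast (hx.1 h')
    have hyl : Fin.last n ∉ y := fun h' => hlast (hy.1 h')
    rw [← Finset.erase_insert hxl, ← Finset.erase_insert hyl, h]
  rw [Finset.sum_image hinj]
  congr 1
  · rw [Finset.powersetCard_map, Finset.sum_map]
    apply Finset.sum_congr rfl
    intro s _
    rw [show (Finset.mapEmbedding Fin.castSuccEmb).toEmbedding s = s.map Fin.castSuccEmb from rfl,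
      Finset.prod_map]
    rfl
  · rw [Finset.powersetCard_map, Finset.sum_map, Finset.mul_sum]
    apply Finset.sum_congr rfl
    intro s _
    rw [show (Finset.mapEmbedding Fin.castSuccEmb).toEmbedding s = s.map Fin.castSuccEmb from rfl]
    have hl : Fin.last n ∉ s.map Fin.castSuccEmb := by
      intro h
      rw [Finset.mem_map] at h
      obtain ⟨x, _, hx⟩ := h
      exact Fin.ne_of_lt (Fin.castSucc_lt_last x) hx
    rw [Finset.prod_insert hl, Finset.prod_map]
    rfl

lemma hsym_succ_rec {n : ℕ} (w : Fin (n+1) → ℚ) (m : ℕ) :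
    hsym w (m+1) = hsym (w ∘ Fin.castSucc) (m+1) + w (Fin.last n) * hsym w m := by
  classical
  unfold hsym
  rw [← Finset.sum_filter_add_sum_filter_not ((Finset.univ : Finset (Fin (n+1))).sym (m+1))
    (fun s => Fin.last n ∈ s)]
  rw [add_comm]
  congr 1
  · -- last ∉ s part
    symm
    apply Finset.sum_bij (i := fun (t : Sym (Fin n) (m+1)) _ => t.map Fin.castSucc)
    · intro t _
      rw [Finset.mem_filter]
      constructor
      · rw [Finset.mem_sym_iff]
        intro a _
        exact Finset.mem_univ a
      · intro hcon
        rw [Sym.mem_map] at hcon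
        obtain ⟨a, _, ha⟩ := hcon
        exact Fin.ne_of_lt (Fin.castSucc_lt_last a) ha
    · intro a _ b _ h
      exact Sym.map_injective (Fin.castSucc_injective n) _ h
    · intro b hb
      rw [Finset.mem_filter] at hb
      have hbl : Fin.last n ∉ b := hb.2
      have hmem : ∀ x ∈ b.toMultiset, x ≠ Fin.last n := by
        intro x hx
        exact fun h => hbl (h ▸ hx)
      refine ⟨Sym.mk (b.toMultiset.attach.map (fun x => (x.1).castPred (hmem x.1 x.2))) (by simp),
        by rw [Finset.mem_sym_iff]; intro a _; exact Finset.mem_univ a, ?_⟩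
      apply Sym.coe_injective
      rw [Sym.coe_map]
      show Multiset.map _ (Multiset.map _ b.toMultiset.attach) = _
      rw [Multiset.map_map]
      have : ∀ x ∈ b.toMultiset.attach,
          (Fin.castSucc ∘ fun x => (x.1).castPred (hmem x.1 x.2)) x = x.1 := by
        intro x _
        simp [Fin.castSucc_castPred]
      rw [Multiset.map_congr rfl this, Multiset.attach_map_val]
    · intro t _
      rw [Sym.coe_map, Multiset.map_map]
  · -- last ∈ s part
    symm
    rw [Finset.mul_sum]
    apply Finset.sum_bij (i := fun (t : Sym (Fin (n+1)) m) _ => Fin.last n ::ₛ t)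
    · intro t _
      rw [Finset.mem_filter]
      exact ⟨by rw [Finset.mem_sym_iff]; intro a _; exact Finset.mem_univ a,
        Sym.mem_cons_self _ _⟩
    · intro a _ b _ h
      exact (Sym.cons_inj_right _ _ _).mp h
    · intro b hb
      rw [Finset.mem_filter] at hb
      exact ⟨b.erase (Fin.last n) hb.2,
        by rw [Finset.mem_sym_iff]; intro a _; exact Finset.mem_univ a, Sym.cons_erase hb.2⟩
    · intro t _
      rw [Sym.coe_cons, Multiset.map_cons, Multiset.prod_cons]

lemma cc_rec {n : ℕ} (w : Fin (n+1) → ℚ) (d : Fin (n+2) → ℚ) (k : ℕ) :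
    cc w d (k+1) + w (Fin.last n) * cc w d k
      = cc (w ∘ Fin.castSucc) (d ∘ Fin.castSucc) (k+1)
        + d (Fin.last (n+1)) * cc (w ∘ Fin.castSucc) (d ∘ Fin.castSucc) k := by
  have hA : cc w d (k+1) + w (Fin.last n) * cc w d k
      = ∑ i ∈ Finset.range (k+2),
          (-1:ℚ)^(k+1-i) * esym d i * hsym (w ∘ Fin.castSucc) (k+1-i) := by
    unfold cc
    rw [Finset.sum_range_succ, Finset.sum_range_succ
      (f := fun i => (-1:ℚ)^(k+1-i) * esym d i * hsym (w ∘ Fin.castSucc) (k+1-i))]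
    rw [Finset.mul_sum, add_right_comm, ← Finset.sum_add_distrib]
    congr 1
    · apply Finset.sum_congr rfl
      intro i hi
      rw [Finset.mem_range] at hi
      have h1 : k + 1 - i = (k - i) + 1 := by omega
      rw [h1, hsym_succ_rec]
      ring
    · simp [Nat.sub_self, hsym_zero]
  have hB : ∑ i ∈ Finset.range (k+2),
        (-1:ℚ)^(k+1-i) * esym d i * hsym (w ∘ Fin.castSucc) (k+1-i)
      = cc (w ∘ Fin.castSucc) (d ∘ Fin.castSucc) (k+1)
        + d (Fin.last (n+1)) * cc (w ∘ Fin.castSucc) (d ∘ Fin.castSucc) k := by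
    unfold cc
    rw [Finset.sum_range_succ', Finset.sum_range_succ'
      (f := fun i => (-1:ℚ)^(k+1-i) * esym (d ∘ Fin.castSucc) i * hsym (w ∘ Fin.castSucc) (k+1-i))]
    have hterm : ∀ i ∈ Finset.range (k+1),
        (-1:ℚ)^(k+1-(i+1)) * esym d (i+1) * hsym (w ∘ Fin.castSucc) (k+1-(i+1))
        = (-1:ℚ)^(k-i) * esym (d ∘ Fin.castSucc) (i+1) * hsym (w ∘ Fin.castSucc) (k-i)
          + d (Fin.last (n+1)) * ((-1:ℚ)^(k-i) * esym (d ∘ Fin.castSucc) i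
              * hsym (w ∘ Fin.castSucc) (k-i)) := by
      intro i _
      have h1 : k + 1 - (i+1) = k - i := by omega
      rw [h1, esym_succ_rec]
      ring
    have h2 : ∀ i ∈ Finset.range (k+1),
        (-1:ℚ)^(k+1-(i+1)) * esym (d ∘ Fin.castSucc) (i+1) * hsym (w ∘ Fin.castSucc) (k+1-(i+1))
        = (-1:ℚ)^(k-i) * esym (d ∘ Fin.castSucc) (i+1) * hsym (w ∘ Fin.castSucc) (k-i) := by
      intro i _
      have h1 : k + 1 - (i+1) = k - i := by omega
      rw [h1]
    rw [Finset.sum_congr rfl hterm, Finset.sum_congr rfl h2, Finset.sum_add_distrib]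
    have h0 : esym d 0 = esym (d ∘ Fin.castSucc) 0 := by rw [esym_zero, esym_zero]
    rw [h0, Finset.mul_sum]
    ring
  rw [hA, hB]

lemma main_aux {n : ℕ} (w : Fin (n+1) → ℚ) (d : Fin (n+2) → ℚ) (k : ℕ) :
    cc w d k = cc (w ∘ Fin.castSucc) (d ∘ Fin.castSucc) k
      + (d (Fin.last (n+1)) - w (Fin.last n)) *
        ∑ i ∈ Finset.range k,
          (-1)^i * (w (Fin.last n))^i * cc (w ∘ Fin.castSucc) (d ∘ Fin.castSucc) (k - i - 1) := by
  induction k with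
  | zero => simp [cc_zero]
  | succ k ih =>
    have hrec := cc_rec w d k
    have hs : ∑ i ∈ Finset.range (k+1),
        (-1:ℚ)^i * (w (Fin.last n))^i * cc (w ∘ Fin.castSucc) (d ∘ Fin.castSucc) (k+1-i-1)
        = cc (w ∘ Fin.castSucc) (d ∘ Fin.castSucc) k
          - w (Fin.last n) * ∑ i ∈ Finset.range k,
              (-1:ℚ)^i * (w (Fin.last n))^i
                * cc (w ∘ Fin.castSucc) (d ∘ Fin.castSucc) (k-i-1) := by
      rw [Finset.sum_range_succ']
      have hterm : ∀ i ∈ Finset.range k,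
          (-1:ℚ)^(i+1) * (w (Fin.last n))^(i+1)
              * cc (w ∘ Fin.castSucc) (d ∘ Fin.castSucc) (k+1-(i+1)-1)
          = (-(w (Fin.last n))) * ((-1:ℚ)^i * (w (Fin.last n))^i
              * cc (w ∘ Fin.castSucc) (d ∘ Fin.castSucc) (k-i-1)) := by
        intro i _
        have h1 : k + 1 - (i+1) - 1 = k - i - 1 := by omega
        rw [h1]
        ring
      rw [Finset.sum_congr rfl hterm, ← Finset.mul_sum]
      norm_num
      ring
    rw [hs]
    have : cc w d (k+1) = cc (w ∘ Fin.castSucc) (d ∘ Fin.castSucc) (k+1)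
        + d (Fin.last (n+1)) * cc (w ∘ Fin.castSucc) (d ∘ Fin.castSucc) k
        - w (Fin.last n) * cc w d k := by linarith
    rw [this, ih]
    ring

theorem chern_unfolding (m : ℕ) (hm : 1 ≤ m) (w : Fin (m+1) → ℚ) (d : Fin (m+2) → ℚ)
    (k : ℕ) (hk : 1 ≤ k) :
    cc w d k = cc (w ∘ Fin.castSucc) (d ∘ Fin.castSucc) k
      + (d (Fin.last (m+1)) - w (Fin.last m)) *
        ∑ i ∈ Finset.range k,
          (-1)^i * (w (Fin.last m))^i * cc (w ∘ Fin.castSucc) (d ∘ Fin.castSucc) (k - i - 1) := by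
  exact main_aux w d k
end

section
/- Let n ≥ 1, r ≥ 1, let w₁,…,w_{n+r} be nonzero rationals and d₀,…,d_{n+r} rationals with d_{n+j} = w_{n+j} for all j = 1,…,r. Define c_{k,m}(w,d) = Σ_{i=0}^{k} (−1)^{k−i} e_i(d₀,…,d_m) h_{k−i}(w₁,…,w_m) and s_{0,m} = (d₀⋯d_m)/(w₁⋯w_m). Then c_{k,n+r}(w,d) = c_{k,n}(w₁,…,wₙ; d₀,…,dₙ) for all k, and s_{0,n+r} = s_{0,n}. -/
open Finset

lemma last_not_mem {m : ℕ} :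
    Fin.last m ∉ (Finset.univ : Finset (Fin m)).map Fin.castSuccEmb := by
  simp only [Finset.mem_map]
  rintro ⟨x, -, hx⟩
  have := congrArg Fin.val hx
  simp [Fin.castSuccEmb] at this
  omega

lemma esym_succ {m : ℕ} (w : Fin (m+1) → ℚ) (j : ℕ) :
    esym w (j+1) = esym (fun i => w i.castSucc) (j+1)
      + w (Fin.last m) * esym (fun i => w i.castSucc) j := by
  classical
  unfold esym
  rw [Fin.univ_castSuccEmb, Finset.cons_eq_insert,
      Finset.powersetCard_succ_insert last_not_mem, Finset.sum_union ?hdisj]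
  case hdisj =>
    rw [Finset.disjoint_left]
    intro s hs1 hs2
    obtain ⟨t, _, rfl⟩ := Finset.mem_image.1 hs2
    exact last_not_mem
      ((Finset.mem_powersetCard.1 hs1).1 (Finset.mem_insert_self _ _))
  congr 1
  · rw [Finset.powersetCard_map, Finset.sum_map]
    refine Finset.sum_congr rfl fun s _ => ?_
    show ∏ i ∈ s.map Fin.castSuccEmb, w i = _
    rw [Finset.prod_map]
    rfl
  · rw [Finset.sum_image ?hinj, Finset.mul_sum, Finset.powersetCard_map, Finset.sum_map]
    case hinj =>
      intro s hs t ht hst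
      have hs' : Fin.last m ∉ s := fun h =>
        last_not_mem ((Finset.mem_powersetCard.1 hs).1 h)
      have ht' : Fin.last m ∉ t := fun h =>
        last_not_mem ((Finset.mem_powersetCard.1 ht).1 h)
      rw [← Finset.erase_insert hs', ← Finset.erase_insert ht', hst]
    refine Finset.sum_congr rfl fun s _ => ?_
    show ∏ i ∈ insert (Fin.last m) (s.map Fin.castSuccEmb), w i = _
    have hlast : Fin.last m ∉ s.map Fin.castSuccEmb := fun h => by
      obtain ⟨x, -, hx⟩ := Finset.mem_map.1 h
      have := congrArg Fin.val hx
      simp [Fin.castSuccEmb] at this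
      omega
    rw [Finset.prod_insert hlast, Finset.prod_map]
    rfl

lemma hsym_one_var (w : Fin 1 → ℚ) (n : ℕ) : hsym w n = w 0 ^ n := by
  unfold hsym
  have : (Finset.univ : Finset (Fin 1)) = {0} := by
    ext x; simp [Fin.eq_zero x]
  rw [this, Finset.sym_singleton, Finset.sum_singleton, Sym.coe_replicate,
    Multiset.map_replicate, Multiset.prod_replicate]

lemma hsym_succ {m : ℕ} (w : Fin (m+1) → ℚ) (k : ℕ) :
    hsym w (k+1) = hsym (fun i => w i.castSucc) (k+1) + w (Fin.last m) * hsym w k := by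
  classical
  cases m with
  | zero =>
      have h0 : hsym (fun i : Fin 0 => w i.castSucc) (k+1) = 0 := by
        unfold hsym
        rw [Finset.univ_eq_empty, Finset.sym_empty, Finset.sum_empty]
      rw [h0, hsym_one_var, hsym_one_var]
      have : Fin.last 0 = 0 := rfl
      rw [this]
      ring
  | succ m =>
    unfold hsym
    rw [Finset.sym_univ, Finset.sym_univ, Finset.sym_univ]
    rw [← Finset.sum_filter_add_sum_filter_not Finset.univ
      (fun s : Sym (Fin (m+2)) (k+1) => Fin.last (m+1) ∈ s)]
    rw [add_comm]
    congr 1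
    · -- multisets not containing `last` ↔ Sym (Fin (m+1)) (k+1)
      refine Finset.sum_bij'
        (i := fun s _ => Sym.map
          (fun x : Fin (m+2) => if h : (x : ℕ) < m+1 then (⟨x, h⟩ : Fin (m+1)) else 0) s)
        (j := fun t _ => Sym.map Fin.castSucc t) ?_ ?_ ?_ ?_ ?_
      · intro a _; exact Finset.mem_univ _
      · intro t _
        simp only [Finset.mem_filter, Finset.mem_univ, true_and]
        intro h
        obtain ⟨y, -, hy⟩ := Sym.mem_map.1 h
        have := congrArg Fin.val hy
        simp at this
        omega
      · intro s hs
        rw [Sym.map_map]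
        have : ∀ x ∈ s, (Fin.castSucc ∘ fun x : Fin (m+2) =>
            if h : (x : ℕ) < m+1 then (⟨x, h⟩ : Fin (m+1)) else 0) x = id x := by
          intro x hx
          have hne : x ≠ Fin.last (m+1) := by
            have := (Finset.mem_filter.1 hs).2
            exact fun he => this (he ▸ hx)
          have hlt : (x : ℕ) < m+1 := by
            have h1 := x.isLt
            have h2 : (x : ℕ) ≠ m+1 := fun he => hne (Fin.ext (by simp [he]))
            omega
          simp [hlt, Function.comp, Fin.ext_iff]
        rw [Sym.map_congr this, Sym.map_id]
      · intro t _
        rw [Sym.map_map]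
        have : ∀ x ∈ t, ((fun x : Fin (m+2) =>
            if h : (x : ℕ) < m+1 then (⟨x, h⟩ : Fin (m+1)) else 0) ∘ Fin.castSucc) x
              = id x := by
          intro x _
          have hlt : ((Fin.castSucc x : Fin (m+2)) : ℕ) < m+1 := x.isLt
          simp only [Function.comp, hlt, dif_pos, id]
          exact Fin.ext rfl
        rw [Sym.map_congr this, Sym.map_id]
      · intro s hs
        have : ∀ x ∈ s.toMultiset, w x
            = ((fun i : Fin (m+1) => w i.castSucc) ∘ (fun x : Fin (m+2) =>
              if h : (x : ℕ) < m+1 then (⟨x, h⟩ : Fin (m+1)) else 0)) x := by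
          intro x hx
          have hx' : x ∈ s := hx
          have hne : x ≠ Fin.last (m+1) := by
            have := (Finset.mem_filter.1 hs).2
            exact fun he => this (he ▸ hx')
          have hlt : (x : ℕ) < m+1 := by
            have h1 := x.isLt
            have h2 : (x : ℕ) ≠ m+1 := fun he => hne (Fin.ext (by simp [he]))
            omega
          simp only [Function.comp, hlt, dif_pos]
          rfl
        rw [Sym.coe_map, Multiset.map_map]
        exact congrArg Multiset.prod (Multiset.map_congr rfl this)
    · -- multisets containing `last` ↔ Sym (Fin (m+2)) k via cons
      rw [Finset.mul_sum]
      refine Finset.sum_bij'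
        (i := fun s hs => s.erase (Fin.last (m+1)) (by
          have := (Finset.mem_filter.1 hs).2; simpa using this))
        (j := fun t _ => (Fin.last (m+1)) ::ₛ t) ?_ ?_ ?_ ?_ ?_
      · intro a _; exact Finset.mem_univ _
      · intro t _
        simp only [Finset.mem_filter, Finset.mem_univ, true_and]
        exact Sym.mem_cons_self _ _
      · intro s hs
        exact Sym.cons_erase _
      · intro t _
        exact Sym.erase_cons_head _ _ _
      · intro s hs
        conv_lhs => rw [← Sym.cons_erase (s := s) (a := Fin.last (m+1)) (by
          have := (Finset.mem_filter.1 hs).2; simpa using this)]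
        rw [Sym.coe_cons, Multiset.map_cons, Multiset.prod_cons]


lemma alg (e E h H : ℕ → ℚ) (a : ℚ)
    (hE0 : E 0 = 1) (he0 : e 0 = 1) (hH0 : H 0 = 1) (hh0 : h 0 = 1)
    (hErec : ∀ i, E (i+1) = e (i+1) + a * e i)
    (hHrec : ∀ j, H (j+1) = h (j+1) + a * H j) (k : ℕ) :
    ∑ i ∈ Finset.range (k+1), (-1)^(k-i) * E i * H (k-i)
      = ∑ i ∈ Finset.range (k+1), (-1)^(k-i) * e i * h (k-i) := by
  have claimA : ∀ k : ℕ,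
      ∑ i ∈ Finset.range (k+2), (-1)^(k+1-i) * E i * H (k+1-i)
        = (∑ i ∈ Finset.range (k+2), (-1)^(k+1-i) * e i * H (k+1-i))
          + a * ∑ i ∈ Finset.range (k+1), (-1)^(k-i) * e i * H (k-i) := by
    intro k
    rw [Finset.sum_range_succ' (fun i => (-1:ℚ)^(k+1-i) * E i * H (k+1-i)) (k+1),
        Finset.sum_range_succ' (fun i => (-1:ℚ)^(k+1-i) * e i * H (k+1-i)) (k+1)]
    have e1 : ∀ i ∈ Finset.range (k+1),
        (fun i => (-1:ℚ)^(k+1-i) * E i * H (k+1-i)) (i+1)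
          = ((-1)^(k-i) * e (i+1) * H (k-i)) + a * ((-1)^(k-i) * e i * H (k-i)) := by
      intro i hi
      have h1 : k + 1 - (i+1) = k - i := by omega
      simp only [h1, hErec i]
      ring
    have e2 : ∀ i ∈ Finset.range (k+1),
        (fun i => (-1:ℚ)^(k+1-i) * e i * H (k+1-i)) (i+1)
          = (-1)^(k-i) * e (i+1) * H (k-i) := by
      intro i hi
      have h1 : k + 1 - (i+1) = k - i := by omega
      simp only [h1]
    rw [Finset.sum_congr rfl e1, Finset.sum_congr rfl e2, Finset.sum_add_distrib,
        ← Finset.mul_sum, hE0, he0]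
    ring
  have claimB : ∀ k : ℕ,
      (∑ i ∈ Finset.range (k+2), (-1)^(k+1-i) * e i * H (k+1-i))
        + a * (∑ i ∈ Finset.range (k+1), (-1)^(k-i) * e i * H (k-i))
        = ∑ i ∈ Finset.range (k+2), (-1)^(k+1-i) * e i * h (k+1-i) := by
    intro k
    rw [Finset.sum_range_succ (fun i => (-1:ℚ)^(k+1-i) * e i * H (k+1-i)) (k+1),
        Finset.sum_range_succ (fun i => (-1:ℚ)^(k+1-i) * e i * h (k+1-i)) (k+1)]
    have e1 : ∀ i ∈ Finset.range (k+1),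
        (fun i => (-1:ℚ)^(k+1-i) * e i * H (k+1-i)) i
          = ((-1)^(k+1-i) * e i * h (k+1-i)) - a * ((-1)^(k-i) * e i * H (k-i)) := by
      intro i hi
      have hik : i ≤ k := by
        have := Finset.mem_range.1 hi; omega
      have h1 : k + 1 - i = (k - i) + 1 := by omega
      simp only [h1, hHrec (k-i), pow_succ]
      ring
    rw [Finset.sum_congr rfl e1, Finset.sum_sub_distrib, ← Finset.mul_sum]
    simp only [Nat.sub_self, hH0, hh0]
    ring
  cases k with
  | zero => simp [hE0, he0, hH0, hh0]
  | succ k =>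
      have := (claimA k).trans (claimB k)
      simpa using this

lemma cc_step {m : ℕ} (w : Fin (m+1) → ℚ) (d : Fin (m+2) → ℚ)
    (hlast : d (Fin.last (m+1)) = w (Fin.last m)) (k : ℕ) :
    cc w d k = cc (fun i => w i.castSucc) (fun i => d i.castSucc) k := by
  unfold cc
  refine alg (fun i => esym (fun i : Fin (m+1) => d i.castSucc) i) (fun i => esym d i)
    (fun j => hsym (fun i : Fin m => w i.castSucc) j) (fun j => hsym w j)
    (w (Fin.last m)) (esym_zero d) (esym_zero _) (hsym_zero w) (hsym_zero _) ?_ ?_ k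
  · intro i
    have := esym_succ d i
    rw [hlast] at this
    exact this
  · intro j
    exact hsym_succ w j

lemma aux (n : ℕ) : ∀ (r : ℕ) (w : Fin (n+r) → ℚ) (d : Fin (n+r+1) → ℚ),
    (∀ i : Fin (n+r), n ≤ (i : ℕ) → d i.succ = w i) →
    (∀ k, cc w d k
        = cc (fun i : Fin n => w (Fin.castLE (Nat.le_add_right n r) i))
             (fun i : Fin (n+1) => d (Fin.castLE (by omega) i)) k) ∧
      (∏ i, d i) * (∏ j : Fin n, w (Fin.castLE (Nat.le_add_right n r) j))
        = (∏ i : Fin (n+1), d (Fin.castLE (by omega) i)) * (∏ j, w j) := by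
  intro r
  induction r with
  | zero =>
      intro w d _
      constructor
      · intro k
        have hw : (fun i : Fin n => w (Fin.castLE (Nat.le_add_right n 0) i)) = w :=
          funext fun i => congrArg w (Fin.ext rfl)
        have hdd : (fun i : Fin (n+1) => d (Fin.castLE (by omega : n+1 ≤ n+0+1) i)) = d :=
          funext fun i => congrArg d (Fin.ext rfl)
        rw [hw, hdd]
      · have hd2 : (∏ i : Fin (n+1), d (Fin.castLE (by omega : n+1 ≤ n+0+1) i))
            = ∏ i, d i :=
          Finset.prod_congr rfl fun i _ => congrArg d (Fin.ext rfl)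
        have hw2 : (∏ j : Fin n, w (Fin.castLE (Nat.le_add_right n 0) j)) = ∏ j, w j :=
          Finset.prod_congr rfl fun i _ => congrArg w (Fin.ext rfl)
        rw [hd2, hw2]
  | succ r ih =>
      intro w d hd
      have hlast : d (Fin.last (n+r+1)) = w (Fin.last (n+r)) := by
        rw [← Fin.succ_last]
        exact hd (Fin.last (n+r)) (by simp)
      have hd' : ∀ i : Fin (n+r), n ≤ (i : ℕ) →
          (fun i : Fin (n+r+1) => d i.castSucc) i.succ
            = (fun i : Fin (n+r) => w i.castSucc) i := by
        intro i hi
        show d (i.succ.castSucc) = w i.castSucc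
        rw [← Fin.succ_castSucc]
        exact hd i.castSucc (by simpa using hi)
      obtain ⟨h1, h2⟩ := ih (fun i => w i.castSucc) (fun i => d i.castSucc) hd'
      constructor
      · intro k
        have h3 : cc (fun i : Fin n =>
              (fun i : Fin (n+r) => w i.castSucc) (Fin.castLE (Nat.le_add_right n r) i))
            (fun i : Fin (n+1) =>
              (fun i : Fin (n+r+1) => d i.castSucc)
                (Fin.castLE (by omega : n+1 ≤ n+r+1) i)) k
            = cc (fun i : Fin n => w (Fin.castLE (Nat.le_add_right n (r+1)) i))
              (fun i : Fin (n+1) => d (Fin.castLE (by omega : n+1 ≤ n+(r+1)+1) i)) k := rfl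
        exact (cc_step w d hlast k).trans ((h1 k).trans h3)
      · have p1 : (∏ i, d i)
            = (∏ i : Fin (n+r+1), (fun i : Fin (n+r+1) => d i.castSucc) i)
              * w (Fin.last (n+r)) := by
          rw [← hlast]
          exact Fin.prod_univ_castSucc (n := n+r+1) d
        have p2 : (∏ j, w j)
            = (∏ j : Fin (n+r), (fun i : Fin (n+r) => w i.castSucc) j)
              * w (Fin.last (n+r)) :=
          Fin.prod_univ_castSucc (n := n+r) w
        have e1 : (∏ j : Fin n, w (Fin.castLE (Nat.le_add_right n (r+1)) j))
            = ∏ j : Fin n, (fun i : Fin (n+r) => w i.castSucc)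
                (Fin.castLE (Nat.le_add_right n r) j) := rfl
        have e2 : (∏ i : Fin (n+1), d (Fin.castLE (by omega : n+1 ≤ n+(r+1)+1) i))
            = ∏ i : Fin (n+1), (fun i : Fin (n+r+1) => d i.castSucc)
                (Fin.castLE (by omega : n+1 ≤ n+r+1) i) := rfl
        rw [p1, p2, e1, e2]
        linear_combination w (Fin.last (n+r)) * h2

theorem trivial_unfolding_invariance (n r : ℕ) (hn : 1 ≤ n) (hr : 1 ≤ r)
    (w : Fin (n+r) → ℚ) (hw : ∀ i, w i ≠ 0) (d : Fin (n+r+1) → ℚ)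
    (hd : ∀ i : Fin (n+r), n ≤ (i : ℕ) → d i.succ = w i) :
    (∀ k, cc w d k
        = cc (fun i : Fin n => w (Fin.castLE (by omega) i))
             (fun i : Fin (n+1) => d (Fin.castLE (by omega) i)) k) ∧
      (∏ i, d i) / (∏ j, w j)
        = (∏ i : Fin (n+1), d (Fin.castLE (by omega) i))
          / (∏ j : Fin n, w (Fin.castLE (by omega) j)) := by
  obtain ⟨h1, h2⟩ := aux n r w d hd
  refine ⟨h1, ?_⟩
  have hw1 : (∏ j, w j) ≠ 0 := Finset.prod_ne_zero_iff.2 fun i _ => hw i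
  have hw2 : (∏ j : Fin n, w (Fin.castLE (by omega : n ≤ n+r) j)) ≠ 0 :=
    Finset.prod_ne_zero_iff.2 fun i _ => hw _
  rw [div_eq_div_iff hw1 hw2]
  linear_combination h2
end

section
/- Let w₁, w₂ be nonzero rationals, d₀, d₁ rationals, and set d₂ = w₂. Define c₁ = d₀ + d₁ − w₁, c₂ = (d₀ − w₁)(d₁ − w₁), σ₂ = w₁w₂, and s₀ = d₀d₁d₂/(w₁w₂) = d₀d₁/w₁. Then s₀² − 3s₀c₁ + 2c₁² + 2c₂ = ((d₀ − 2w₁)(d₁ − 2w₁)/w₁²) · c₂. -/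
theorem triple_point_relation (w1 w2 d0 d1 : ℚ) (hw1 : w1 ≠ 0) (hw2 : w2 ≠ 0) :
    let d2 := w2
    let c1 := d0 + d1 - w1
    let c2 := (d0 - w1) * (d1 - w1)
    let s0 := d0 * d1 * d2 / (w1 * w2)
    s0 ^ 2 - 3 * s0 * c1 + 2 * c1 ^ 2 + 2 * c2
      = ((d0 - 2 * w1) * (d1 - 2 * w1) / w1 ^ 2) * c2 := by
  simp only
  field_simp
  ring
end

section
/- Let w₁, w₂, w₃ be nonzero rationals and d₀, d₁ rationals; set d₂ = w₂ and d₃ = w₃. Define c_k = Σ_{i=0}^{k}(−1)^{k−i}e_i(d₀,d₁,d₂,d₃)h_{k−i}(w₁,w₂,w₃), s₀ = d₀d₁w₂w₃/(w₁w₂w₃), σ₃ = w₁w₂w₃, and the two invariant formulas A(w,d) = (s₀c₂ − 2c₁c₂ − 2c₃)/σ₃ (the #A₀A₁ formula) and Q(w,d) = (s₀³ − 6s₀²c₁ + 11s₀c₁² + 8s₀c₂ − 6c₁³ − 18c₁c₂ − 12c₃)/(24σ₃) (the #A₀⁴ formula). Moreover let T(w,d) = (s'₀² − 3s'₀c'₁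 + 2c'₁² + 2c'₂)/(6w₁w₂) be the #A₀³ formula of the slice, where c'_k = Σ_{i=0}^{k}(−1)^{k−i}e_i(d₀,d₁,w₂)h_{k−i}(w₁,w₂) and s'₀ = d₀d₁/w₁. Then A(w,d) = T(w,d) · 6w₁/w₃. -/
open Finset

-- esym lemmas
lemma esym2_0 (w : Fin 2 → ℚ) : esym w 0 = 1 := by
  rw [esym, show (Finset.univ.powersetCard 0 : Finset (Finset (Fin 2))) = {∅} from by decide,
    Finset.sum_singleton, Finset.prod_empty]

lemma esym2_1 (w : Fin 2 → ℚ) : esym w 1 = w 0 + w 1 := by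
  rw [esym, show (Finset.univ.powersetCard 1 : Finset (Finset (Fin 2))) = {{0},{1}} from by decide,
    Finset.sum_insert (by decide), Finset.sum_singleton]
  simp

lemma esym2_2 (w : Fin 2 → ℚ) : esym w 2 = w 0 * w 1 := by
  rw [esym, show (Finset.univ.powersetCard 2 : Finset (Finset (Fin 2))) = {{0,1}} from by decide,
    Finset.sum_singleton, Finset.prod_insert (by decide), Finset.prod_singleton]

lemma esym3_0 (w : Fin 3 → ℚ) : esym w 0 = 1 := by
  rw [esym, show (Finset.univ.powersetCard 0 : Finset (Finset (Fin 3))) = {∅} from by decide,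
    Finset.sum_singleton, Finset.prod_empty]

lemma esym3_1 (w : Fin 3 → ℚ) : esym w 1 = w 0 + w 1 + w 2 := by
  rw [esym, show (Finset.univ.powersetCard 1 : Finset (Finset (Fin 3))) = {{0},{1},{2}} from by decide,
    Finset.sum_insert (by decide), Finset.sum_insert (by decide), Finset.sum_singleton]
  simp; ring

lemma esym3_2 (w : Fin 3 → ℚ) : esym w 2 = w 0 * w 1 + w 0 * w 2 + w 1 * w 2 := by
  rw [esym, show (Finset.univ.powersetCard 2 : Finset (Finset (Fin 3))) = {{0,1},{0,2},{1,2}} from by decide,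
    Finset.sum_insert (by decide), Finset.sum_insert (by decide), Finset.sum_singleton]
  simp (config := { decide := true }) [Finset.prod_insert, Finset.prod_singleton]
  ring

lemma esym3_3 (w : Fin 3 → ℚ) : esym w 3 = w 0 * w 1 * w 2 := by
  rw [esym, show (Finset.univ.powersetCard 3 : Finset (Finset (Fin 3))) = {{0,1,2}} from by decide,
    Finset.sum_singleton]
  rw [Finset.prod_insert (by decide), Finset.prod_insert (by decide), Finset.prod_singleton]
  ring

lemma esym4_0 (w : Fin 4 → ℚ) : esym w 0 = 1 := by
  rw [esym, show (Finset.univ.powersetCard 0 : Finset (Finset (Fin 4))) = {∅} from by decide,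
    Finset.sum_singleton, Finset.prod_empty]

lemma esym4_1 (w : Fin 4 → ℚ) : esym w 1 = w 0 + w 1 + w 2 + w 3 := by
  rw [esym, show (Finset.univ.powersetCard 1 : Finset (Finset (Fin 4))) = {{0},{1},{2},{3}} from by decide,
    Finset.sum_insert (by decide), Finset.sum_insert (by decide), Finset.sum_insert (by decide),
    Finset.sum_singleton]
  simp; ring

lemma esym4_2 (w : Fin 4 → ℚ) :
    esym w 2 = w 0*w 1 + w 0*w 2 + w 0*w 3 + w 1*w 2 + w 1*w 3 + w 2*w 3 := by
  rw [esym, show (Finset.univ.powersetCard 2 : Finset (Finset (Fin 4))) =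
      {{0,1},{0,2},{0,3},{1,2},{1,3},{2,3}} from by decide,
    Finset.sum_insert (by decide), Finset.sum_insert (by decide), Finset.sum_insert (by decide),
    Finset.sum_insert (by decide), Finset.sum_insert (by decide), Finset.sum_singleton]
  simp (config := { decide := true }) [Finset.prod_insert, Finset.prod_singleton]
  ring

lemma esym4_3 (w : Fin 4 → ℚ) :
    esym w 3 = w 0*w 1*w 2 + w 0*w 1*w 3 + w 0*w 2*w 3 + w 1*w 2*w 3 := by
  rw [esym, show (Finset.univ.powersetCard 3 : Finset (Finset (Fin 4))) =
      {{0,1,2},{0,1,3},{0,2,3},{1,2,3}} from by decide,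
    Finset.sum_insert (by decide), Finset.sum_insert (by decide), Finset.sum_insert (by decide),
    Finset.sum_singleton]
  simp (config := { decide := true }) [Finset.prod_insert, Finset.prod_singleton]
  ring

-- hsym lemmas
lemma hsym2_0 (w : Fin 2 → ℚ) : hsym w 0 = 1 := by
  rw [hsym, show (Finset.univ.sym 0 : Finset (Sym (Fin 2) 0)) = {Sym.nil} from by decide,
    Finset.sum_singleton]
  simp

lemma hsym2_1 (w : Fin 2 → ℚ) : hsym w 1 = w 0 + w 1 := by
  rw [hsym, show (Finset.univ.sym 1 : Finset (Sym (Fin 2) 1)) = {(0 ::ₛ Sym.nil),(1 ::ₛ Sym.nil)} from by decide,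
    Finset.sum_insert (by decide), Finset.sum_singleton]
  simp [Sym.coe_cons, Sym.coe_nil]

lemma hsym2_2 (w : Fin 2 → ℚ) : hsym w 2 = w 0^2 + w 0*w 1 + w 1^2 := by
  rw [hsym, show (Finset.univ.sym 2 : Finset (Sym (Fin 2) 2)) =
      {(0 ::ₛ 0 ::ₛ Sym.nil),(0 ::ₛ 1 ::ₛ Sym.nil),(1 ::ₛ 1 ::ₛ Sym.nil)} from by decide,
    Finset.sum_insert (by decide), Finset.sum_insert (by decide), Finset.sum_singleton]
  simp [Sym.coe_cons, Sym.coe_nil]; ring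

lemma hsym3_0 (w : Fin 3 → ℚ) : hsym w 0 = 1 := by
  rw [hsym, show (Finset.univ.sym 0 : Finset (Sym (Fin 3) 0)) = {Sym.nil} from by decide,
    Finset.sum_singleton]
  simp

lemma hsym3_1 (w : Fin 3 → ℚ) : hsym w 1 = w 0 + w 1 + w 2 := by
  rw [hsym, show (Finset.univ.sym 1 : Finset (Sym (Fin 3) 1)) =
      {(0 ::ₛ Sym.nil),(1 ::ₛ Sym.nil),(2 ::ₛ Sym.nil)} from by decide,
    Finset.sum_insert (by decide), Finset.sum_insert (by decide), Finset.sum_singleton]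
  simp [Sym.coe_cons, Sym.coe_nil]; ring

lemma hsym3_2 (w : Fin 3 → ℚ) :
    hsym w 2 = w 0^2 + w 1^2 + w 2^2 + w 0*w 1 + w 0*w 2 + w 1*w 2 := by
  rw [hsym, show (Finset.univ.sym 2 : Finset (Sym (Fin 3) 2)) =
      {(0 ::ₛ 0 ::ₛ Sym.nil),(0 ::ₛ 1 ::ₛ Sym.nil),(0 ::ₛ 2 ::ₛ Sym.nil),(1 ::ₛ 1 ::ₛ Sym.nil),(1 ::ₛ 2 ::ₛ Sym.nil),(2 ::ₛ 2 ::ₛ Sym.nil)} from by decide,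
    Finset.sum_insert (by decide), Finset.sum_insert (by decide), Finset.sum_insert (by decide),
    Finset.sum_insert (by decide), Finset.sum_insert (by decide), Finset.sum_singleton]
  simp [Sym.coe_cons, Sym.coe_nil]; ring

lemma hsym3_3 (w : Fin 3 → ℚ) :
    hsym w 3 = w 0^3 + w 1^3 + w 2^3 + w 0^2*w 1 + w 0^2*w 2 + w 1^2*w 0 + w 1^2*w 2
      + w 2^2*w 0 + w 2^2*w 1 + w 0*w 1*w 2 := by
  rw [hsym, show (Finset.univ.sym 3 : Finset (Sym (Fin 3) 3)) =
      {(0 ::ₛ 0 ::ₛ 0 ::ₛ Sym.nil),(0 ::ₛ 0 ::ₛ 1 ::ₛ Sym.nil),(0 ::ₛ 0 ::ₛ 2 ::ₛ Sym.nil),(0 ::ₛ 1 ::ₛ 1 ::ₛ Sym.nil),(0 ::ₛ 1 ::ₛ 2 ::ₛ Sym.nil),(0 ::ₛ 2 ::ₛ 2 ::ₛ Sym.nil),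
       (1 ::ₛ 1 ::ₛ 1 ::ₛ Sym.nil),(1 ::ₛ 1 ::ₛ 2 ::ₛ Sym.nil),(1 ::ₛ 2 ::ₛ 2 ::ₛ Sym.nil),(2 ::ₛ 2 ::ₛ 2 ::ₛ Sym.nil)} from by decide,
    Finset.sum_insert (by decide), Finset.sum_insert (by decide), Finset.sum_insert (by decide),
    Finset.sum_insert (by decide), Finset.sum_insert (by decide), Finset.sum_insert (by decide),
    Finset.sum_insert (by decide), Finset.sum_insert (by decide), Finset.sum_insert (by decide),
    Finset.sum_singleton]
  simp [Sym.coe_cons, Sym.coe_nil]; ring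

theorem A0A1_slice (w1 w2 w3 d0 d1 : ℚ)
    (hw1 : w1 ≠ 0) (hw2 : w2 ≠ 0) (hw3 : w3 ≠ 0) :
    let c := cc ![w1, w2, w3] ![d0, d1, w2, w3]
    let s := d0 * d1 * w2 * w3 / (w1 * w2 * w3)
    let A := (s * (c 2) - 2*(c 1)*(c 2) - 2*(c 3)) / (w1 * w2 * w3)
    let c' := cc ![w1, w2] ![d0, d1, w2]
    let s' := d0 * d1 / w1
    let T := (s'^2 - 3*s'*(c' 1) + 2*(c' 1)^2 + 2*(c' 2)) / (6 * (w1 * w2))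
    A = T * (6 * w1 / w3) := by
  norm_num [cc, Finset.sum_range_succ,
    esym2_0, esym2_1, esym2_2, esym3_0, esym3_1, esym3_2, esym3_3,
    esym4_0, esym4_1, esym4_2, esym4_3,
    hsym2_0, hsym2_1, hsym2_2, hsym3_0, hsym3_1, hsym3_2, hsym3_3,
    Matrix.cons_val_zero, Matrix.cons_val_one, Matrix.head_cons,
    Matrix.cons_val_two, Matrix.tail_cons, Matrix.cons_val_three, Matrix.head_fin_const]
  field_simp
  ring
end
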